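/- arXiv:2208.14948 — 2 statements merged into one kernel-verified Lean document; each statement's English description precedes it below -/
import Mathlib

section
/- Let X be a real random variable with E[X²] < ∞ and Laplace transform φ(s) = E[e^{−sX²}] for s > 0. Then for all s ∈ (0, ε] and all n ≥ 1: n·s·φ(s)^{n−1} ≤ e^{−1}/(φ(ε)·E[X² e^{−εX²}]), provided E[X² e^{−εX²}] > 0. -/
open MeasureTheory

lemma stmt14_aux_exp (a : ℝ) (ha : 0 ≤ a) :
    Real.exp (-a) ≤ 1 - a * Real.exp (-a) := by
  have h1 : (1 + a) * Real.exp (-a) ≤ 1 := by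
    have h2 : 1 + a ≤ Real.exp a := by
      have := Real.add_one_le_exp a; linarith
    calc (1 + a) * Real.exp (-a) ≤ Real.exp a * Real.exp (-a) :=
          mul_le_mul_of_nonneg_right h2 (Real.exp_pos _).le
      _ = 1 := by rw [← Real.exp_add]; simp
  nlinarith [Real.exp_pos (-a)]

lemma stmt14_aux_xe (x : ℝ) (hx : 0 ≤ x) : x * Real.exp (-x) ≤ Real.exp (-1) := by
  have h : x ≤ Real.exp (x - 1) := by
    have := Real.add_one_le_exp (x - 1); linarith
  calc x * Real.exp (-x) ≤ Real.exp (x - 1) * Real.exp (-x) :=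
        mul_le_mul_of_nonneg_right h (Real.exp_pos _).le
    _ = Real.exp (-1) := by rw [← Real.exp_add]; ring_nf

set_option maxHeartbeats 1000000 in
/-- For a real random variable `X` with finite second moment and Laplace transform
`φ(s) = E[e^{-s X²}]`, one has for all `0 < s ≤ ε` and `n ≥ 1`:
`n s φ(s)^(n-1) ≤ e⁻¹ / (φ(ε) E[X² e^{-ε X²}])`, provided `E[X² e^{-ε X²}] > 0`. -/
theorem stmt14 {Ω : Type*} [MeasurableSpace Ω] (μ : Measure Ω) [IsProbabilityMeasure μ]
    (X : Ω → ℝ) (hmeas : Measurable X)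
    (hint : Integrable (fun ω => (X ω) ^ 2) μ)
    (ε : ℝ) (hε : 0 < ε)
    (hpos : 0 < ∫ ω, (X ω) ^ 2 * Real.exp (-(ε * (X ω) ^ 2)) ∂μ)
    (s : ℝ) (hs : s ∈ Set.Ioc 0 ε) (n : ℕ) (hn : 1 ≤ n) :
    (n : ℝ) * s * (∫ ω, Real.exp (-(s * (X ω) ^ 2)) ∂μ) ^ (n - 1)
      ≤ Real.exp (-1) /
        ((∫ ω, Real.exp (-(ε * (X ω) ^ 2)) ∂μ) *
          ∫ ω, (X ω) ^ 2 * Real.exp (-(ε * (X ω) ^ 2)) ∂μ) := by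
  obtain ⟨hs0, hsε⟩ := hs
  -- integrability of the exponential
  have hie : ∀ t : ℝ, 0 ≤ t → Integrable (fun ω => Real.exp (-(t * (X ω) ^ 2))) μ := by
    intro t ht
    refine ⟨(Measurable.exp (by measurability)).aestronglyMeasurable, ?_⟩
    refine HasFiniteIntegral.of_bounded (C := 1) ?_
    filter_upwards with ω
    rw [Real.norm_eq_abs, abs_of_pos (Real.exp_pos _)]
    exact Real.exp_le_one_iff.mpr (neg_nonpos.mpr (mul_nonneg ht (sq_nonneg _)))
  -- integrability of X² e^{-tX²}
  have hix : ∀ t : ℝ, 0 ≤ t →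
      Integrable (fun ω => (X ω) ^ 2 * Real.exp (-(t * (X ω) ^ 2))) μ := by
    intro t ht
    refine hint.mono ((by measurability : Measurable fun ω =>
      (X ω) ^ 2 * Real.exp (-(t * (X ω) ^ 2))).aestronglyMeasurable) ?_
    filter_upwards with ω
    rw [Real.norm_eq_abs, Real.norm_eq_abs,
        abs_of_nonneg (mul_nonneg (sq_nonneg _) (Real.exp_pos _).le),
        abs_of_nonneg (sq_nonneg (X ω))]
    have : Real.exp (-(t * (X ω) ^ 2)) ≤ 1 :=
      Real.exp_le_one_iff.mpr (neg_nonpos.mpr (mul_nonneg ht (sq_nonneg _)))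
    nlinarith [sq_nonneg (X ω)]
  set A := ∫ ω, Real.exp (-(s * (X ω) ^ 2)) ∂μ with hAdef
  set B := ∫ ω, Real.exp (-(ε * (X ω) ^ 2)) ∂μ with hBdef
  set M := ∫ ω, (X ω) ^ 2 * Real.exp (-(ε * (X ω) ^ 2)) ∂μ with hMdef
  set M' := ∫ ω, (X ω) ^ 2 * Real.exp (-(s * (X ω) ^ 2)) ∂μ with hM'def
  -- B > 0
  have hB : 0 < B := by
    rw [hBdef, integral_pos_iff_support_of_nonneg_ae]
    · have : (Function.support fun ω => Real.exp (-(ε * (X ω) ^ 2))) = Set.univ := by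
        ext ω; simp [Function.mem_support, (Real.exp_pos _).ne']
      rw [this]; simp
    · filter_upwards with ω using (Real.exp_pos _).le
    · exact hie ε hε.le
  -- B ≤ A
  have hBA : B ≤ A := by
    refine integral_mono (hie ε hε.le) (hie s hs0.le) fun ω => ?_
    exact Real.exp_le_exp.mpr (by nlinarith [sq_nonneg (X ω)])
  -- M ≤ M'
  have hMM' : M ≤ M' := by
    refine integral_mono (hix ε hε.le) (hix s hs0.le) fun ω => ?_
    have : Real.exp (-(ε * (X ω) ^ 2)) ≤ Real.exp (-(s * (X ω) ^ 2)) :=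
      Real.exp_le_exp.mpr (by nlinarith [sq_nonneg (X ω)])
    nlinarith [sq_nonneg (X ω)]
  have hA0 : 0 < A := lt_of_lt_of_le hB hBA
  -- key: A ≤ 1 - s * M'
  have hkey : A ≤ 1 - s * M' := by
    have h1 : A ≤ ∫ ω, (1 - s * ((X ω) ^ 2 * Real.exp (-(s * (X ω) ^ 2)))) ∂μ := by
      refine integral_mono (hie s hs0.le)
        ((integrable_const 1).sub ((hix s hs0.le).const_mul s)) fun ω => ?_
      have := stmt14_aux_exp (s * (X ω) ^ 2) (mul_nonneg hs0.le (sq_nonneg _))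
      rw [neg_mul_eq_neg_mul] at this ⊢
      nlinarith [this]
    rw [integral_sub (integrable_const 1) ((hix s hs0.le).const_mul s),
        integral_const, integral_const_mul, probReal_univ] at h1
    simpa using h1
  have hA1 : A ≤ Real.exp (-(s * M)) := by
    have h2 : 1 - s * M' ≤ 1 - s * M := by nlinarith
    have h3 : 1 - s * M ≤ Real.exp (-(s * M)) := by
      have := Real.add_one_le_exp (-(s * M)); linarith
    linarith
  -- combine
  have hn1 : n - 1 + 1 = n := Nat.succ_pred_eq_of_pos hn
  have hMpos : (0:ℝ) < M := hpos
  rw [le_div_iff₀ (by positivity)]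
  have hAn : A ^ n ≤ Real.exp (-((n : ℝ) * s * M)) := by
    calc A ^ n ≤ Real.exp (-(s * M)) ^ n := pow_le_pow_left₀ hA0.le hA1 n
      _ = Real.exp (-((n : ℝ) * s * M)) := by
          rw [← Real.exp_nat_mul]; ring_nf
  have hchain : (n : ℝ) * s * A ^ (n - 1) * B ≤ (n : ℝ) * s * A ^ n := by
    have : A ^ (n - 1) * B ≤ A ^ (n - 1) * A :=
      mul_le_mul_of_nonneg_left hBA (pow_nonneg hA0.le _)
    have hpow : A ^ (n - 1) * A = A ^ n := by
      rw [← pow_succ, hn1]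
    nlinarith [mul_nonneg (Nat.cast_nonneg n : (0:ℝ) ≤ n) hs0.le]
  have hfin : (n : ℝ) * s * A ^ n * M ≤ Real.exp (-1) := by
    have hx := stmt14_aux_xe ((n : ℝ) * s * M)
      (by positivity)
    calc (n : ℝ) * s * A ^ n * M
        ≤ (n : ℝ) * s * Real.exp (-((n : ℝ) * s * M)) * M := by
          exact mul_le_mul_of_nonneg_right
            (mul_le_mul_of_nonneg_left hAn (by positivity)) hMpos.le
      _ = ((n : ℝ) * s * M) * Real.exp (-((n : ℝ) * s * M)) := by ring
      _ ≤ Real.exp (-1) := hx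
  calc (n : ℝ) * s * A ^ (n - 1) * (B * M)
      = ((n : ℝ) * s * A ^ (n - 1) * B) * M := by ring
    _ ≤ ((n : ℝ) * s * A ^ n) * M := mul_le_mul_of_nonneg_right hchain hMpos.le
    _ ≤ Real.exp (-1) := hfin
end

section
/- Let Y be a nonnegative random variable. If the truncated second moment V(x) = E[Y² 1{Y ≤ x}] is slowly varying at infinity, then so is h(x) = 2∫₀^x P(Y > u) u du, and conversely; moreover h(√x) = ∫₀^x P(Y² > y) dy for all x > 0. -/
open MeasureTheory Filter

/-- A function `L` is slowly varying at infinity if `L (t x) / L x → 1` as `x → ∞`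
for every `t > 0`. -/
def SlowlyVarying (L : ℝ → ℝ) : Prop :=
  ∀ t : ℝ, 0 < t → Tendsto (fun x => L (t * x) / L x) atTop (nhds 1)


set_option linter.unusedSectionVars false
set_option linter.unusedVariables false
set_option maxHeartbeats 1000000

lemma sq_strictMonoOn : StrictMonoOn (fun u : ℝ => u^2) (Set.Ici 0) :=
  fun a ha b _ hab => by simpa using pow_lt_pow_left₀ hab ha two_ne_zero

lemma sq_image_Ioi : (fun u : ℝ => u^2) '' Set.Ioi 0 = Set.Ioi 0 := by
  ext y
  constructor
  · rintro ⟨u, hu, rfl⟩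
    exact pow_pos (Set.mem_Ioi.mp hu) 2
  · intro hy
    exact ⟨Real.sqrt y, Real.sqrt_pos.2 hy, Real.sq_sqrt hy.le⟩

lemma hasDerivWithinAt_sq (s : Set ℝ) (u : ℝ) :
    HasDerivWithinAt (fun u : ℝ => u^2) (2*u) s u := by
  simpa using (hasDerivAt_pow 2 u).hasDerivWithinAt (s := s)

lemma subst_sq_Ioi (g : ℝ → ℝ) :
    ∫ y in Set.Ioi 0, g y = ∫ u in Set.Ioi 0, 2 * u * g (u^2) := by
  have key := integral_image_eq_integral_abs_deriv_smul (f := fun u : ℝ => u^2)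
      (f' := fun u => 2*u) (s := Set.Ioi 0) measurableSet_Ioi
      (fun u _ => hasDerivWithinAt_sq _ u)
      (sq_strictMonoOn.injOn.mono Set.Ioi_subset_Ici_self) g
  rw [sq_image_Ioi] at key
  rw [key]
  refine setIntegral_congr_fun measurableSet_Ioi (fun u hu => ?_)
  rw [smul_eq_mul, abs_of_pos (by linarith [Set.mem_Ioi.1 hu])]

section Aux
variable {Ω : Type*} [MeasurableSpace Ω] (μ : Measure Ω) [IsProbabilityMeasure μ]
  (Y : Ω → ℝ)

noncomputable def Ffun (u : ℝ) : ℝ := (μ {ω | u < Y ω}).toReal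
noncomputable def Vfun (x : ℝ) : ℝ :=
  ∫ ω, Set.indicator {ω' | Y ω' ≤ x} (fun ω' => (Y ω') ^ 2) ω ∂μ
noncomputable def hfun (x : ℝ) : ℝ := 2 * ∫ u in Set.Ioo 0 x, Ffun μ Y u * u

lemma measSet_le (hmeas : Measurable Y) (x : ℝ) : MeasurableSet {ω | Y ω ≤ x} :=
  measurableSet_le hmeas measurable_const

lemma measSet_lt (hmeas : Measurable Y) (u : ℝ) : MeasurableSet {ω | u < Y ω} :=
  measurableSet_lt measurable_const hmeas

noncomputable def Wfun (x : ℝ) (ω : Ω) : ℝ := Set.indicator {ω' | Y ω' ≤ x} Y ω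

lemma Wfun_meas (hmeas : Measurable Y) (x : ℝ) : Measurable (Wfun Y x) :=
  hmeas.indicator (measSet_le Y hmeas x)

lemma Wfun_nonneg (hpos : ∀ ω, 0 ≤ Y ω) (x : ℝ) (ω : Ω) : 0 ≤ Wfun Y x ω :=
  Set.indicator_nonneg (fun ω' _ => hpos ω') ω

lemma Wfun_sq (x : ℝ) (ω : Ω) :
    Wfun Y x ω ^ 2 = Set.indicator {ω' | Y ω' ≤ x} (fun ω' => (Y ω') ^ 2) ω := by
  by_cases h : ω ∈ {ω' | Y ω' ≤ x} <;>
    simp [Wfun, Set.indicator_of_mem, Set.indicator_of_notMem, h]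

lemma Wfun_le (x : ℝ) (ω : Ω) : Wfun Y x ω ≤ max x 0 := by
  by_cases h : ω ∈ {ω' | Y ω' ≤ x}
  · rw [Wfun, Set.indicator_of_mem h]
    exact le_trans h (le_max_left _ _)
  · rw [Wfun, Set.indicator_of_notMem h]
    exact le_max_right _ _

lemma integrable_Wsq (hmeas : Measurable Y) (hpos : ∀ ω, 0 ≤ Y ω) (x : ℝ) : Integrable (fun ω => Wfun Y x ω ^ 2) μ := by
  refine Integrable.mono' (integrable_const ((max x 0)^2)) ?_ ?_
  · exact ((Wfun_meas Y hmeas x).pow_const 2).aestronglyMeasurable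
  · refine Eventually.of_forall (fun ω => ?_)
    rw [Real.norm_eq_abs, abs_of_nonneg (sq_nonneg _)]
    exact pow_le_pow_left₀ (Wfun_nonneg Y hpos x ω) (Wfun_le Y x ω) 2

lemma lt_Wfun_iff {x u : ℝ} (hu : 0 < u) (ω : Ω) :
    u < Wfun Y x ω ↔ (u < Y ω ∧ Y ω ≤ x) := by
  by_cases h : ω ∈ {ω' | Y ω' ≤ x}
  · rw [Wfun, Set.indicator_of_mem h]
    exact ⟨fun h' => ⟨h', h⟩, fun h' => h'.1⟩
  · rw [Wfun, Set.indicator_of_notMem h]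
    constructor
    · intro h'; linarith
    · intro h'; exact absurd h'.2 h

lemma Vfun_eq_int (hmeas : Measurable Y) (hpos : ∀ ω, 0 ≤ Y ω) {x : ℝ} (hx : 0 ≤ x) :
    Vfun μ Y x
      = ∫ u in Set.Ioo 0 x, 2 * u * (μ ({ω | u < Y ω} ∩ {ω | Y ω ≤ x})).toReal := by
  have step1 : Vfun μ Y x = ∫ ω, Wfun Y x ω ^ 2 ∂μ :=
    integral_congr_ae (Eventually.of_forall (fun ω => (Wfun_sq Y x ω).symm))
  have step2 := (integrable_Wsq μ Y hmeas hpos x).integral_eq_integral_meas_lt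
    (Eventually.of_forall (fun ω => sq_nonneg _))
  have step3 := subst_sq_Ioi (fun t => (μ {ω | t < Wfun Y x ω ^ 2}).toReal)
  have step4 : ∀ u ∈ Set.Ioi (0:ℝ),
      2 * u * (μ {ω | u^2 < Wfun Y x ω ^ 2}).toReal
        = Set.indicator (Set.Ioo 0 x)
            (fun u => 2 * u * (μ ({ω | u < Y ω} ∩ {ω | Y ω ≤ x})).toReal) u := by
    intro u hu
    have hu' : (0:ℝ) < u := hu
    have hset : {ω | u^2 < Wfun Y x ω ^ 2} = {ω | u < Y ω} ∩ {ω | Y ω ≤ x} := by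
      ext ω
      have hw := Wfun_nonneg Y hpos x ω
      have hiff : u^2 < Wfun Y x ω ^ 2 ↔ u < Wfun Y x ω := by
        constructor
        · intro h
          by_contra hc
          push_neg at hc
          exact absurd h (not_lt.2 (pow_le_pow_left₀ hw hc 2))
        · intro h
          exact pow_lt_pow_left₀ h hu'.le two_ne_zero
      simp only [Set.mem_setOf_eq, Set.mem_inter_iff]
      rw [hiff, lt_Wfun_iff Y hu' ω]
    rw [hset]
    by_cases hux : u < x
    · rw [Set.indicator_of_mem (Set.mem_Ioo.2 ⟨hu', hux⟩)]
    · rw [Set.indicator_of_notMem (fun hc => hux hc.2)]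
      have : {ω | u < Y ω} ∩ {ω | Y ω ≤ x} = ∅ := by
        ext ω
        simp only [Set.mem_inter_iff, Set.mem_setOf_eq, Set.mem_empty_iff_false, iff_false]
        rintro ⟨h1, h2⟩
        push_neg at hux
        linarith
      rw [this]
      simp
  rw [step1, step2]
  simp only [measureReal_def]
  rw [step3]
  rw [setIntegral_congr_fun measurableSet_Ioi step4,
    integral_indicator measurableSet_Ioo,
    Measure.restrict_restrict measurableSet_Ioo,
    Set.inter_eq_left.2 (fun u hu => hu.1)]

end Aux

section More
variable {Ω : Type*} [MeasurableSpace Ω] (μ : Measure Ω) [IsProbabilityMeasure μ]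
  (Y : Ω → ℝ)

lemma Ffun_nonneg (u : ℝ) : 0 ≤ Ffun μ Y u := ENNReal.toReal_nonneg

lemma Ffun_le_one (u : ℝ) : Ffun μ Y u ≤ 1 := by
  rw [Ffun, ← ENNReal.toReal_one]
  exact ENNReal.toReal_mono ENNReal.one_ne_top (by simpa using prob_le_one (μ := μ))

lemma Ffun_antitone : Antitone (Ffun μ Y) := by
  intro a b hab
  exact ENNReal.toReal_mono (measure_ne_top _ _)
    (measure_mono (fun ω h => lt_of_le_of_lt hab h))

lemma Ffun_measurable : Measurable (Ffun μ Y) := (Ffun_antitone μ Y).measurable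

lemma integrableOn_Fu (x : ℝ) : IntegrableOn (fun u => Ffun μ Y u * u) (Set.Ioo 0 x) := by
  have hbound : ∀ᵐ u ∂(volume.restrict (Set.Ioo 0 x)), ‖Ffun μ Y u * u‖ ≤ |x| := by
    filter_upwards [ae_restrict_mem measurableSet_Ioo] with u hu
    have h1 : |Ffun μ Y u * u| ≤ |u| := by
      rw [abs_mul]
      calc |Ffun μ Y u| * |u| ≤ 1 * |u| := by
            apply mul_le_mul_of_nonneg_right _ (abs_nonneg _)
            rw [abs_of_nonneg (Ffun_nonneg μ Y u)]; exact Ffun_le_one μ Y u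
        _ = |u| := one_mul _
    have h2 : |u| ≤ |x| := by
      rw [abs_of_pos hu.1, abs_of_pos (hu.1.trans hu.2)]
      exact hu.2.le
    exact h1.trans h2
  exact Integrable.mono' (integrable_const _)
    (((Ffun_measurable μ Y).mul measurable_id).aestronglyMeasurable) hbound

/-- the measure of the "middle slab" as a function of `u` is measurable -/
lemma slab_antitone (x : ℝ) :
    Antitone (fun u => (μ ({ω | u < Y ω} ∩ {ω | Y ω ≤ x})).toReal) := by
  intro a b hab
  exact ENNReal.toReal_mono (measure_ne_top _ _)
    (measure_mono (fun ω h => ⟨lt_of_le_of_lt hab h.1, h.2⟩))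

lemma F_split (hmeas : Measurable Y) {a b : ℝ} (hab : a ≤ b) :
    Ffun μ Y a = (μ ({ω | a < Y ω} ∩ {ω | Y ω ≤ b})).toReal + Ffun μ Y b := by
  have hsplit : {ω | a < Y ω}
      = ({ω | a < Y ω} ∩ {ω | Y ω ≤ b}) ∪ {ω | b < Y ω} := by
    ext ω
    simp only [Set.mem_setOf_eq, Set.mem_union, Set.mem_inter_iff]
    constructor
    · intro h
      rcases le_or_gt (Y ω) b with h' | h'
      · exact Or.inl ⟨h, h'⟩
      · exact Or.inr h'
    · rintro (⟨h, _⟩ | h)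
      · exact h
      · linarith
  have hdisj : Disjoint ({ω | a < Y ω} ∩ {ω | Y ω ≤ b}) {ω | b < Y ω} := by
    rw [Set.disjoint_left]
    rintro ω ⟨_, h2⟩ h3
    have h2' : Y ω ≤ b := h2
    have h3' : b < Y ω := h3
    linarith
  have hm := measure_union (μ := μ) hdisj (measSet_lt Y hmeas b)
  rw [← hsplit] at hm
  rw [Ffun, Ffun, hm, ENNReal.toReal_add (measure_ne_top _ _) (measure_ne_top _ _)]

lemma integral_u_Ioo {x : ℝ} (hx : 0 ≤ x) : ∫ u in Set.Ioo (0:ℝ) x, u = x^2 / 2 := by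
  rw [← integral_Ioc_eq_integral_Ioo, ← intervalIntegral.integral_of_le hx]
  simp [integral_id]

lemma hfun_eq (hmeas : Measurable Y) (hpos : ∀ ω, 0 ≤ Y ω) {x : ℝ} (hx : 0 ≤ x) :
    hfun μ Y x = Vfun μ Y x + x^2 * Ffun μ Y x := by
  have hI1 : IntegrableOn
      (fun u => 2 * u * (μ ({ω | u < Y ω} ∩ {ω | Y ω ≤ x})).toReal) (Set.Ioo 0 x) := by
    have hbound : ∀ᵐ u ∂(volume.restrict (Set.Ioo 0 x)),
        ‖2 * u * (μ ({ω | u < Y ω} ∩ {ω | Y ω ≤ x})).toReal‖ ≤ 2 * x := by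
      filter_upwards [ae_restrict_mem measurableSet_Ioo] with u hu
      have h1 : (μ ({ω | u < Y ω} ∩ {ω | Y ω ≤ x})).toReal ≤ 1 := by
        rw [← ENNReal.toReal_one]
        exact ENNReal.toReal_mono ENNReal.one_ne_top
          (by simpa using prob_le_one (μ := μ))
      rw [Real.norm_eq_abs, abs_mul, abs_of_nonneg ENNReal.toReal_nonneg,
        abs_of_pos (by linarith [hu.1] : (0:ℝ) < 2 * u)]
      nlinarith [hu.1, hu.2, ENNReal.toReal_nonneg
        (a := μ ({ω | u < Y ω} ∩ {ω | Y ω ≤ x}))]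
    exact Integrable.mono' (integrable_const _)
      (((measurable_const.mul measurable_id).mul
        (slab_antitone μ Y x).measurable).aestronglyMeasurable) hbound
  have hI2 : IntegrableOn (fun u : ℝ => 2 * u * Ffun μ Y x) (Set.Ioo 0 x) := by
    have hbound : ∀ᵐ u ∂(volume.restrict (Set.Ioo 0 x)),
        ‖2 * u * Ffun μ Y x‖ ≤ 2 * x := by
      filter_upwards [ae_restrict_mem measurableSet_Ioo] with u hu
      rw [Real.norm_eq_abs, abs_mul, abs_of_nonneg (Ffun_nonneg μ Y x),
        abs_of_pos (by linarith [hu.1] : (0:ℝ) < 2 * u)]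
      nlinarith [hu.1, hu.2, Ffun_nonneg μ Y x, Ffun_le_one μ Y x]
    exact Integrable.mono' (integrable_const _)
      ((measurable_const.mul measurable_id).mul_const _).aestronglyMeasurable hbound
  have key : ∫ u in Set.Ioo 0 x, 2 * (Ffun μ Y u * u)
      = ∫ u in Set.Ioo 0 x, (2 * u * (μ ({ω | u < Y ω} ∩ {ω | Y ω ≤ x})).toReal
          + 2 * u * Ffun μ Y x) := by
    refine setIntegral_congr_fun measurableSet_Ioo (fun u hu => ?_)
    rw [F_split μ Y hmeas (le_of_lt hu.2)]
    ring
  have hsum := integral_add hI1 hI2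
  have h2 : ∫ u in Set.Ioo 0 x, 2 * u * Ffun μ Y x = x^2 * Ffun μ Y x := by
    have : (fun u : ℝ => 2 * u * Ffun μ Y x) = (fun u : ℝ => (2 * Ffun μ Y x) * u) := by
      funext u; ring
    rw [this, integral_const_mul, integral_u_Ioo hx]
    ring
  have h3 : hfun μ Y x = ∫ u in Set.Ioo 0 x, 2 * (Ffun μ Y u * u) := by
    rw [hfun, ← integral_const_mul]
  rw [h3, key, hsum, h2, ← Vfun_eq_int μ Y hmeas hpos hx]

end More

lemma sq_image_Ioo {b : ℝ} (hb : 0 ≤ b) :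
    (fun u : ℝ => u^2) '' Set.Ioo 0 b = Set.Ioo 0 (b^2) := by
  ext y
  constructor
  · rintro ⟨u, ⟨hu0, hub⟩, rfl⟩
    exact ⟨pow_pos hu0 2, pow_lt_pow_left₀ hub hu0.le two_ne_zero⟩
  · rintro ⟨hy0, hyb⟩
    refine ⟨Real.sqrt y, ⟨Real.sqrt_pos.2 hy0, ?_⟩, Real.sq_sqrt hy0.le⟩
    have := Real.sqrt_lt_sqrt hy0.le hyb
    rwa [Real.sqrt_sq hb] at this

lemma subst_sq (g : ℝ → ℝ) {b : ℝ} (hb : 0 ≤ b) :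
    ∫ y in Set.Ioo 0 (b^2), g y = ∫ u in Set.Ioo 0 b, 2 * u * g (u^2) := by
  have key := integral_image_eq_integral_abs_deriv_smul (f := fun u : ℝ => u^2)
      (f' := fun u => 2*u) (s := Set.Ioo 0 b) measurableSet_Ioo
      (fun u _ => hasDerivWithinAt_sq _ u)
      (sq_strictMonoOn.injOn.mono (fun u hu => le_of_lt hu.1)) g
  rw [sq_image_Ioo hb] at key
  rw [key]
  refine setIntegral_congr_fun measurableSet_Ioo (fun u hu => ?_)
  rw [smul_eq_mul, abs_of_pos (by linarith [hu.1])]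

section More2
variable {Ω : Type*} [MeasurableSpace Ω] (μ : Measure Ω) [IsProbabilityMeasure μ]
  (Y : Ω → ℝ)

lemma part2_identity (hpos : ∀ ω, 0 ≤ Y ω) {x : ℝ} (hx : 0 < x) :
    2 * (∫ u in Set.Ioo 0 (Real.sqrt x), (μ {ω | u < Y ω}).toReal * u)
      = ∫ y in Set.Ioo 0 x, (μ {ω | y < (Y ω) ^ 2}).toReal := by
  have h1 := subst_sq (fun y => (μ {ω | y < Y ω ^ 2}).toReal) (Real.sqrt_nonneg x)
  rw [Real.sq_sqrt hx.le] at h1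
  rw [h1, ← integral_const_mul]
  refine setIntegral_congr_fun measurableSet_Ioo (fun u hu => ?_)
  have hset : {ω | u^2 < Y ω ^ 2} = {ω | u < Y ω} := by
    ext ω
    have hY := hpos ω
    simp only [Set.mem_setOf_eq]
    constructor
    · intro h
      by_contra hc
      push_neg at hc
      exact absurd h (not_lt.2 (pow_le_pow_left₀ hY hc 2))
    · intro h
      exact pow_lt_pow_left₀ h (le_of_lt hu.1) two_ne_zero
  rw [hset]
  ring

lemma integrable_ind (hmeas : Measurable Y) (hpos : ∀ ω, 0 ≤ Y ω) (c : ℝ) :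
    Integrable (fun ω => Set.indicator {ω' | Y ω' ≤ c} (fun ω' => (Y ω') ^ 2) ω) μ := by
  refine Integrable.mono' (integrable_const ((max c 0)^2)) ?_ ?_
  · exact ((hmeas.pow_const 2).indicator (measSet_le Y hmeas c)).aestronglyMeasurable
  · refine Eventually.of_forall (fun ω => ?_)
    rw [Real.norm_eq_abs, abs_of_nonneg (Set.indicator_nonneg (fun ω' _ => sq_nonneg _) ω)]
    by_cases h : ω ∈ {ω' | Y ω' ≤ c}
    · rw [Set.indicator_of_mem h]
      exact pow_le_pow_left₀ (hpos ω) (le_trans h (le_max_left _ _)) 2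
    · rw [Set.indicator_of_notMem h]
      exact sq_nonneg _

lemma Vfun_mono (hmeas : Measurable Y) (hpos : ∀ ω, 0 ≤ Y ω) : Monotone (Vfun μ Y) := by
  intro a b hab
  refine integral_mono (integrable_ind μ Y hmeas hpos a) (integrable_ind μ Y hmeas hpos b)
    (fun ω => ?_)
  exact Set.indicator_le_indicator_of_subset (fun ω' h => le_trans h hab)
    (fun ω' => sq_nonneg _) ω

lemma hfun_mono : Monotone (hfun μ Y) := by
  intro a b hab
  rw [hfun, hfun]
  apply mul_le_mul_of_nonneg_left _ (by norm_num : (0:ℝ) ≤ 2)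
  refine setIntegral_mono_set (integrableOn_Fu μ Y b) ?_ ?_
  · filter_upwards [ae_restrict_mem measurableSet_Ioo] with u hu
    exact mul_nonneg (Ffun_nonneg μ Y u) (le_of_lt hu.1)
  · exact HasSubset.Subset.eventuallyLE (Set.Ioo_subset_Ioo le_rfl hab)

end More2

section More3
variable {Ω : Type*} [MeasurableSpace Ω] (μ : Measure Ω) [IsProbabilityMeasure μ]
  (Y : Ω → ℝ)

lemma Vfun_nonneg (x : ℝ) : 0 ≤ Vfun μ Y x :=
  integral_nonneg (fun ω => Set.indicator_nonneg (fun ω' _ => sq_nonneg _) ω)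

lemma Vfun_setint (hmeas : Measurable Y) (x : ℝ) :
    Vfun μ Y x = ∫ ω in {ω' | Y ω' ≤ x}, (Y ω)^2 ∂μ := by
  rw [Vfun, integral_indicator (measSet_le Y hmeas x)]

lemma V_diff_ge (hmeas : Measurable Y) (hpos : ∀ ω, 0 ≤ Y ω) {a b : ℝ}
    (h0 : 0 ≤ a) (hab : a ≤ b) :
    a^2 * (Ffun μ Y a - Ffun μ Y b) ≤ Vfun μ Y b - Vfun μ Y a := by
  set S := {ω | a < Y ω} ∩ {ω | Y ω ≤ b} with hS
  have hSm : MeasurableSet S := (measSet_lt Y hmeas a).inter (measSet_le Y hmeas b)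
  have hFd : Ffun μ Y a - Ffun μ Y b = (μ S).toReal := by
    rw [F_split μ Y hmeas hab]; ring
  have hsplit : {ω | Y ω ≤ b} = {ω | Y ω ≤ a} ∪ S := by
    ext ω
    simp only [Set.mem_setOf_eq, Set.mem_union, hS, Set.mem_inter_iff]
    constructor
    · intro h
      rcases le_or_gt (Y ω) a with h' | h'
      · exact Or.inl h'
      · exact Or.inr ⟨h', h⟩
    · rintro (h | ⟨_, h⟩)
      · exact le_trans h hab
      · exact h
  have hdisj : Disjoint {ω | Y ω ≤ a} S := by
    rw [Set.disjoint_left]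
    rintro ω h1 ⟨h2, _⟩
    have h1' : Y ω ≤ a := h1
    have h2' : a < Y ω := h2
    linarith
  have hIb : IntegrableOn (fun ω => (Y ω)^2) {ω' | Y ω' ≤ b} μ :=
    (integrable_indicator_iff (measSet_le Y hmeas b)).1 (integrable_ind μ Y hmeas hpos b)
  have hIa : IntegrableOn (fun ω => (Y ω)^2) {ω' | Y ω' ≤ a} μ :=
    (integrable_indicator_iff (measSet_le Y hmeas a)).1 (integrable_ind μ Y hmeas hpos a)
  have hIS : IntegrableOn (fun ω => (Y ω)^2) S μ :=
    hIb.mono_set (by rw [hsplit]; exact Set.subset_union_right)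
  have hsum : Vfun μ Y b = Vfun μ Y a + ∫ ω in S, (Y ω)^2 ∂μ := by
    rw [Vfun_setint μ Y hmeas, Vfun_setint μ Y hmeas, hsplit,
      setIntegral_union hdisj hSm hIa hIS]
  have hlow : a^2 * (μ S).toReal ≤ ∫ ω in S, (Y ω)^2 ∂μ := by
    have := setIntegral_mono_on (f := fun _ => a^2) (g := fun ω => (Y ω)^2)
      (integrableOn_const (measure_ne_top μ S)) hIS hSm
      (fun ω hω => pow_le_pow_left₀ h0 (le_of_lt hω.1) 2)
    rwa [setIntegral_const, smul_eq_mul, mul_comm] at this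
  rw [hsum, hFd]
  linarith

lemma F_tendsto_zero (hmeas : Measurable Y) {x : ℝ} (hx : 0 < x) :
    Tendsto (fun n : ℕ => Ffun μ Y (2^n * x)) atTop (nhds 0) := by
  set s : ℕ → Set Ω := fun n => {ω | 2^n * x < Y ω} with hs
  have hanti : Antitone s := by
    intro m n hmn ω hω
    have hω' : (2:ℝ)^n * x < Y ω := hω
    have : (2:ℝ)^m ≤ 2^n := pow_le_pow_right₀ one_le_two hmn
    exact lt_of_le_of_lt (by nlinarith) hω'
  have hempty : ⋂ n, s n = ∅ := by
    ext ω
    simp only [Set.mem_iInter, Set.mem_empty_iff_false, iff_false, not_forall]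
    obtain ⟨n, hn⟩ := pow_unbounded_of_one_lt (Y ω / x) one_lt_two
    refine ⟨n, fun hc => ?_⟩
    have hc' : (2:ℝ)^n * x < Y ω := hc
    rw [div_lt_iff₀ hx] at hn
    linarith
  have hμ := tendsto_measure_iInter_atTop (μ := μ)
    (fun n => ((measSet_lt Y hmeas _)).nullMeasurableSet) hanti ⟨0, measure_ne_top _ _⟩
  rw [hempty, measure_empty] at hμ
  have := (ENNReal.tendsto_toReal (by simp)).comp hμ
  exact this

end More3

section More4
variable {Ω : Type*} [MeasurableSpace Ω] (μ : Measure Ω) [IsProbabilityMeasure μ]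
  (Y : Ω → ℝ)

lemma tail_bound (hmeas : Measurable Y) (hpos : ∀ ω, 0 ≤ Y ω) {x ε : ℝ}
    (hx : 0 < x) (hε : 0 < ε) (hε1 : ε ≤ 1)
    (hstep : ∀ k : ℕ, Vfun μ Y (2^(k+1) * x) ≤ (1+ε) * Vfun μ Y (2^k * x)) :
    x^2 * Ffun μ Y x ≤ 2 * ε * Vfun μ Y x := by
  set a : ℕ → ℝ := fun k => Ffun μ Y (2^k * x) with ha
  set b : ℕ → ℝ := fun k => Vfun μ Y (2^k * x) with hb
  have hb0 : ∀ k, 0 ≤ b k := fun k => Vfun_nonneg μ Y _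
  have hbk : ∀ k, b k ≤ (1+ε)^k * b 0 := by
    intro k
    induction k with
    | zero => simp
    | succ n ih =>
      calc b (n+1) ≤ (1+ε) * b n := hstep n
        _ ≤ (1+ε) * ((1+ε)^n * b 0) := by
            apply mul_le_mul_of_nonneg_left ih (by linarith)
        _ = (1+ε)^(n+1) * b 0 := by ring
  have hdiff : ∀ k : ℕ, a k - a (k+1) ≤ (ε * b 0 / x^2) * (1/2)^k := by
    intro k
    have hxk : (0:ℝ) < 2^k * x := by positivity
    have h1 : (2^k * x)^2 * (a k - a (k+1)) ≤ b (k+1) - b k := by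
      have := V_diff_ge μ Y hmeas hpos (le_of_lt hxk)
        (by rw [pow_succ]; nlinarith [pow_pos (by norm_num : (0:ℝ) < 2) k] :
          (2:ℝ)^k * x ≤ 2^(k+1) * x)
      simpa [ha, hb] using this
    have h2 : b (k+1) - b k ≤ ε * (2^k * b 0) := by
      have hs := hstep k
      have h3 := hbk k
      have h4 : (1+ε)^k ≤ 2^k := pow_le_pow_left₀ (by linarith) (by linarith) k
      have h5 : ε * b k ≤ ε * ((1+ε)^k * b 0) :=
        mul_le_mul_of_nonneg_left h3 (le_of_lt hε)
      have h6 : ε * ((1+ε)^k * b 0) ≤ ε * (2^k * b 0) := by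
        apply mul_le_mul_of_nonneg_left _ (le_of_lt hε)
        exact mul_le_mul_of_nonneg_right h4 (hb0 0)
      simp only [hb] at hs ⊢
      nlinarith
    have hexp : ((2:ℝ)^k * x)^2 = (2^k * 2^k) * x^2 := by ring
    have h2k : (0:ℝ) < 2^k := pow_pos (by norm_num) k
    have heq : (ε * b 0 / x^2) * (1/2)^k
        = ε * (2^k * b 0) / ((2^k * 2^k) * x^2) := by
      rw [div_pow, one_pow]
      field_simp
    rw [heq, le_div_iff₀ (by positivity)]
    calc (a k - a (k+1)) * (2^k * 2^k * x^2)
        = (2^k * x)^2 * (a k - a (k+1)) := by ring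
      _ ≤ b (k+1) - b k := h1
      _ ≤ ε * (2^k * b 0) := h2
  have hsum : ∀ n : ℕ, a 0 - a n ≤ 2 * (ε * b 0 / x^2) := by
    intro n
    have h1 : a 0 - a n = ∑ k ∈ Finset.range n, (a k - a (k+1)) :=
      (Finset.sum_range_sub' a n).symm
    have h2 : ∑ k ∈ Finset.range n, (a k - a (k+1))
        ≤ ∑ k ∈ Finset.range n, (ε * b 0 / x^2) * (1/2)^k :=
      Finset.sum_le_sum (fun k _ => hdiff k)
    have h3 : ∑ k ∈ Finset.range n, (ε * b 0 / x^2) * (1/2)^k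
        = (ε * b 0 / x^2) * ∑ k ∈ Finset.range n, (1/2:ℝ)^k := by
      rw [Finset.mul_sum]
    have h4 : (ε * b 0 / x^2) * ∑ k ∈ Finset.range n, (1/2:ℝ)^k
        ≤ (ε * b 0 / x^2) * 2 := by
      apply mul_le_mul_of_nonneg_left (sum_geometric_two_le n)
        (div_nonneg (mul_nonneg hε.le (hb0 0)) (sq_nonneg x))
    linarith
  have hlim : Tendsto a atTop (nhds 0) := F_tendsto_zero μ Y hmeas hx
  have ha0 : a 0 - 2 * (ε * b 0 / x^2) ≤ 0 :=
    ge_of_tendsto' hlim (fun n => by linarith [hsum n])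
  have hax : a 0 = Ffun μ Y x := by rw [ha]; norm_num
  have hbx : b 0 = Vfun μ Y x := by rw [hb]; norm_num
  rw [hax, hbx] at ha0
  have hx2 : (0:ℝ) < x^2 := by positivity
  have h7 : 2 * (ε * Vfun μ Y x / x^2) = (2 * ε * Vfun μ Y x) / x^2 := by ring
  rw [h7] at ha0
  have h8 : Ffun μ Y x ≤ (2 * ε * Vfun μ Y x) / x^2 := by linarith
  rw [le_div_iff₀ hx2] at h8
  linarith [h8]

end More4

section More5
variable {Ω : Type*} [MeasurableSpace Ω] (μ : Measure Ω) [IsProbabilityMeasure μ]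
  (Y : Ω → ℝ)

lemma hfun_nonneg (x : ℝ) : 0 ≤ hfun μ Y x := by
  rw [hfun]
  apply mul_nonneg (by norm_num)
  apply setIntegral_nonneg measurableSet_Ioo
  intro u hu
  exact mul_nonneg (Ffun_nonneg μ Y u) (le_of_lt hu.1)

lemma h_incr {x : ℝ} (hx : 0 < x) :
    hfun μ Y x + 3 * x^2 * Ffun μ Y (2*x) ≤ hfun μ Y (2*x) := by
  have hsplit : Set.Ioo 0 (2*x) = Set.Ioo 0 x ∪ Set.Ico x (2*x) := by
    ext u
    simp only [Set.mem_Ioo, Set.mem_union, Set.mem_Ico]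
    constructor
    · rintro ⟨h1, h2⟩
      rcases lt_or_ge u x with h | h
      · exact Or.inl ⟨h1, h⟩
      · exact Or.inr ⟨h, h2⟩
    · rintro (⟨h1, h2⟩ | ⟨h1, h2⟩)
      · exact ⟨h1, by linarith⟩
      · exact ⟨by linarith, h2⟩
  have hdisj : Disjoint (Set.Ioo 0 x) (Set.Ico x (2*x)) := by
    rw [Set.disjoint_left]
    rintro u ⟨_, h2⟩ ⟨h3, _⟩
    linarith
  have hIci : Set.Ico x (2*x) ⊆ Set.Ioo 0 (2*x) :=
    fun u hu => ⟨lt_of_lt_of_le hx hu.1, hu.2⟩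
  have hIoo : Set.Ioo 0 x ⊆ Set.Ioo 0 (2*x) :=
    Set.Ioo_subset_Ioo le_rfl (by linarith)
  have hInt := integrableOn_Fu μ Y (2*x)
  have hU : ∫ u in Set.Ioo 0 (2*x), Ffun μ Y u * u
      = (∫ u in Set.Ioo 0 x, Ffun μ Y u * u)
        + ∫ u in Set.Ico x (2*x), Ffun μ Y u * u := by
    rw [hsplit]
    exact setIntegral_union hdisj measurableSet_Ico (hInt.mono_set hIoo)
      (hInt.mono_set hIci)
  have hlow : Ffun μ Y (2*x) * (3 * x^2 / 2)
      ≤ ∫ u in Set.Ico x (2*x), Ffun μ Y u * u := by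
    have hmono : ∀ u ∈ Set.Ico x (2*x), Ffun μ Y (2*x) * u ≤ Ffun μ Y u * u := by
      intro u hu
      apply mul_le_mul_of_nonneg_right (Ffun_antitone μ Y hu.2.le) (by linarith [hu.1])
    have hIc : IntegrableOn (fun u => Ffun μ Y (2*x) * u) (Set.Ico x (2*x)) :=
      ((continuous_const.mul continuous_id).integrableOn_Icc).mono_set
        Set.Ico_subset_Icc_self
    have := setIntegral_mono_on hIc (hInt.mono_set hIci) measurableSet_Ico hmono
    have hval : ∫ u in Set.Ico x (2*x), Ffun μ Y (2*x) * u
        = Ffun μ Y (2*x) * (3 * x^2 / 2) := by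
      rw [integral_Ico_eq_integral_Ioo, ← integral_Ioc_eq_integral_Ioo,
        ← intervalIntegral.integral_of_le (by linarith : x ≤ 2*x),
        intervalIntegral.integral_const_mul]
      rw [integral_id]
      ring
    rw [hval] at this
    exact this
  rw [hfun, hfun, hU]
  nlinarith [hlow]

lemma V_eventually_pos (hmeas : Measurable Y) (hpos : ∀ ω, 0 ≤ Y ω)
    (hnd : μ {ω | 0 < Y ω} ≠ 0) :
    ∃ x₁ : ℝ, ∀ x ≥ x₁, 0 < Vfun μ Y x := by
  have hc : ∃ c : ℝ, 0 < c ∧ μ {ω | c < Y ω} ≠ 0 := by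
    by_contra hcon
    push_neg at hcon
    have hall : ∀ n : ℕ, μ {ω | 1/(n+1:ℝ) < Y ω} = 0 := by
      intro n
      rcases eq_or_ne (μ {ω | 1/(n+1:ℝ) < Y ω}) 0 with h | h
      · exact h
      · exact absurd h (fun h' => h' (hcon _ (by positivity)))
    apply hnd
    refine measure_mono_null (fun ω hω => ?_) (measure_iUnion_null hall)
    obtain ⟨n, hn⟩ := exists_nat_one_div_lt (show (0:ℝ) < Y ω from hω)
    exact Set.mem_iUnion.2 ⟨n, by exact_mod_cast hn⟩
  obtain ⟨c, hc0, hcμ⟩ := hc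
  have hm : ∃ m : ℕ, μ ({ω | c < Y ω} ∩ {ω | Y ω ≤ (m:ℝ)}) ≠ 0 := by
    by_contra hcon
    push_neg at hcon
    apply hcμ
    refine measure_mono_null (fun ω hω => ?_) (measure_iUnion_null hcon)
    obtain ⟨m, hm⟩ := exists_nat_ge (Y ω)
    exact Set.mem_iUnion.2 ⟨m, hω, hm⟩
  obtain ⟨m, hmμ⟩ := hm
  set S := {ω | c < Y ω} ∩ {ω | Y ω ≤ (m:ℝ)} with hS
  have hSm : MeasurableSet S := (measSet_lt Y hmeas c).inter (measSet_le Y hmeas m)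
  have hVm : 0 < Vfun μ Y m := by
    have hIb : IntegrableOn (fun ω => (Y ω)^2) {ω' | Y ω' ≤ (m:ℝ)} μ :=
      (integrable_indicator_iff (measSet_le Y hmeas m)).1 (integrable_ind μ Y hmeas hpos m)
    have hIS : IntegrableOn (fun ω => (Y ω)^2) S μ :=
      hIb.mono_set Set.inter_subset_right
    have h1 : c^2 * (μ S).toReal ≤ ∫ ω in S, (Y ω)^2 ∂μ := by
      have := setIntegral_mono_on (f := fun _ => c^2) (g := fun ω => (Y ω)^2)
        (integrableOn_const (measure_ne_top μ S)) hIS hSm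
        (fun ω hω => pow_le_pow_left₀ hc0.le (le_of_lt hω.1) 2)
      rwa [setIntegral_const, smul_eq_mul, mul_comm] at this
    have h2 : ∫ ω in S, (Y ω)^2 ∂μ ≤ Vfun μ Y m := by
      rw [Vfun_setint μ Y hmeas]
      apply setIntegral_mono_set hIb
        (Eventually.of_forall (fun ω => sq_nonneg _))
        (HasSubset.Subset.eventuallyLE Set.inter_subset_right)
    have h3 : 0 < (μ S).toReal :=
      ENNReal.toReal_pos hmμ (measure_ne_top _ _)
    nlinarith [mul_pos (pow_pos hc0 2) h3]
  exact ⟨m, fun x hx => lt_of_lt_of_le hVm (Vfun_mono μ Y hmeas hpos hx)⟩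

end More5

lemma sv_transfer {f g : ℝ → ℝ} (hg : SlowlyVarying g)
    (hfg : Tendsto (fun x => f x / g x) atTop (nhds 1))
    (hf0 : ∀ᶠ x in atTop, f x ≠ 0) (hg0 : ∀ᶠ x in atTop, g x ≠ 0) :
    SlowlyVarying f := by
  intro t ht
  have htend : Tendsto (fun x : ℝ => t * x) atTop atTop :=
    Tendsto.const_mul_atTop ht tendsto_id
  have h1 : Tendsto (fun x => f (t*x) / g (t*x)) atTop (nhds 1) := hfg.comp htend
  have h2 : Tendsto (fun x => g x / f x) atTop (nhds 1) := by
    have h := hfg.inv₀ one_ne_zero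
    rw [inv_one] at h
    refine h.congr (fun x => ?_)
    rw [inv_div]
  have h3 := (h1.mul (hg t ht)).mul h2
  norm_num at h3
  refine h3.congr' ?_
  filter_upwards [hf0, hg0, htend.eventually hg0] with x hfx hgx hgtx
  field_simp

section More6
variable {Ω : Type*} [MeasurableSpace Ω] (μ : Measure Ω) [IsProbabilityMeasure μ]
  (Y : Ω → ℝ)

lemma T_div_V (hmeas : Measurable Y) (hpos : ∀ ω, 0 ≤ Y ω)
    (hVpos : ∃ x₁ : ℝ, ∀ x ≥ x₁, 0 < Vfun μ Y x)
    (hSV : SlowlyVarying (Vfun μ Y)) :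
    Tendsto (fun x => x^2 * Ffun μ Y x / Vfun μ Y x) atTop (nhds 0) := by
  obtain ⟨x₁, hx₁⟩ := hVpos
  rw [tendsto_order]
  constructor
  · intro a ha
    refine Eventually.of_forall (fun x => lt_of_lt_of_le ha ?_)
    exact div_nonneg (mul_nonneg (sq_nonneg x) (Ffun_nonneg μ Y x)) (Vfun_nonneg μ Y x)
  · intro a ha
    set ε := min (a/4) 1 with hεdef
    have hε : 0 < ε := lt_min (by linarith) one_pos
    have hε1 : ε ≤ 1 := min_le_right _ _
    have hεa : 2*ε < a := by
      have := min_le_left (a/4) 1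
      have : ε ≤ a/4 := this
      linarith
    have hevent : ∀ᶠ y in atTop, Vfun μ Y (2*y) < (1+ε) * Vfun μ Y y := by
      have h1 := (hSV 2 two_pos).eventually_lt_const (by linarith : (1:ℝ) < 1+ε)
      filter_upwards [h1, eventually_ge_atTop x₁] with y hy hy1
      have hVy := hx₁ y hy1
      rwa [div_lt_iff₀ hVy] at hy
    obtain ⟨x₂, hx₂⟩ := eventually_atTop.1 hevent
    filter_upwards [eventually_ge_atTop (max x₂ x₁), eventually_gt_atTop (0:ℝ)]
      with x hx hx0
    have hxx₂ : x₂ ≤ x := le_trans (le_max_left _ _) hx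
    have hxx₁ : x₁ ≤ x := le_trans (le_max_right _ _) hx
    have hstep : ∀ k : ℕ, Vfun μ Y (2^(k+1) * x) ≤ (1+ε) * Vfun μ Y (2^k * x) := by
      intro k
      have h2k : (1:ℝ) ≤ 2^k := by
        simpa using pow_le_pow_right₀ one_le_two (Nat.zero_le k)
      have hle : x₂ ≤ 2^k * x := le_trans hxx₂ (by nlinarith)
      have := hx₂ _ hle
      calc Vfun μ Y (2^(k+1)*x) = Vfun μ Y (2*(2^k*x)) := by
            rw [pow_succ]; ring_nf
        _ ≤ (1+ε) * Vfun μ Y (2^k * x) := this.le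
    have hTb := tail_bound μ Y hmeas hpos hx0 hε hε1 hstep
    have hV := hx₁ x hxx₁
    rw [div_lt_iff₀ hV]
    nlinarith [hTb, hV]

lemma T_div_h (hpos : ∀ ω, 0 ≤ Y ω)
    (hhpos : ∃ x₁ : ℝ, ∀ x ≥ x₁, 0 < hfun μ Y x)
    (hSV : SlowlyVarying (hfun μ Y)) :
    Tendsto (fun x => x^2 * Ffun μ Y x / hfun μ Y x) atTop (nhds 0) := by
  obtain ⟨x₁, hx₁⟩ := hhpos
  rw [tendsto_order]
  constructor
  · intro a ha
    refine Eventually.of_forall (fun x => lt_of_lt_of_le ha ?_)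
    exact div_nonneg (mul_nonneg (sq_nonneg x) (Ffun_nonneg μ Y x)) (hfun_nonneg μ Y x)
  · intro a ha
    set ε := min (a/2) 1 with hεdef
    have hε : 0 < ε := lt_min (by linarith) one_pos
    have hεa : (4/3)*ε < a := by
      have : ε ≤ a/2 := min_le_left _ _
      linarith
    have hevent : ∀ᶠ y in atTop,
        (2*y)^2 * Ffun μ Y (2*y) ≤ (4/3)*ε * hfun μ Y (2*y)
          ∧ 0 < hfun μ Y (2*y) := by
      have h1 := (hSV 2 two_pos).eventually_lt_const (by linarith : (1:ℝ) < 1+ε)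
      filter_upwards [h1, eventually_ge_atTop x₁, eventually_gt_atTop (0:ℝ)]
        with y hy hy1 hy0
      have hhy := hx₁ y hy1
      rw [div_lt_iff₀ hhy] at hy
      have hi := h_incr μ Y hy0
      have hm : hfun μ Y y ≤ hfun μ Y (2*y) := hfun_mono μ Y (by linarith)
      have hkey : 3 * y^2 * Ffun μ Y (2*y) ≤ ε * hfun μ Y (2*y) := by nlinarith
      constructor
      · nlinarith
      · linarith
    obtain ⟨x₃, hx₃⟩ := eventually_atTop.1 hevent
    filter_upwards [eventually_ge_atTop (2*x₃), eventually_gt_atTop (0:ℝ)]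
      with x hx hx0
    have hy3 : x₃ ≤ x/2 := by linarith
    have := hx₃ (x/2) hy3
    rw [show 2*(x/2) = x by ring] at this
    obtain ⟨hbound, hhx⟩ := this
    rw [div_lt_iff₀ hhx]
    nlinarith

end More6

/-- For a nonnegative random variable `Y`, the truncated second moment
`V(x) = E[Y² 1{Y ≤ x}]` is slowly varying iff `h(x) = 2 ∫₀^x P(Y > u) u du` is
slowly varying; moreover `h(√x) = ∫₀^x P(Y² > y) dy` for all `x > 0`. -/
theorem stmt18 {Ω : Type*} [MeasurableSpace Ω] (μ : Measure Ω) [IsProbabilityMeasure μ]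
    (Y : Ω → ℝ) (hmeas : Measurable Y) (hpos : ∀ ω, 0 ≤ Y ω) :
    (SlowlyVarying (fun x => ∫ ω, Set.indicator {ω' | Y ω' ≤ x} (fun ω' => (Y ω') ^ 2) ω ∂μ)
        ↔ SlowlyVarying (fun x => 2 * ∫ u in Set.Ioo 0 x, (μ {ω | u < Y ω}).toReal * u)) ∧
      ∀ x : ℝ, 0 < x →
        2 * (∫ u in Set.Ioo 0 (Real.sqrt x), (μ {ω | u < Y ω}).toReal * u)
          = ∫ y in Set.Ioo 0 x, (μ {ω | y < (Y ω) ^ 2}).toReal := by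
  constructor
  · show SlowlyVarying (Vfun μ Y) ↔ SlowlyVarying (hfun μ Y)
    by_cases hnd : μ {ω | 0 < Y ω} = 0
    · have hVz : Vfun μ Y = fun _ => (0:ℝ) := by
        funext x
        rw [Vfun]
        apply integral_eq_zero_of_ae
        filter_upwards [measure_eq_zero_iff_ae_notMem.1 hnd] with ω hω
        have hY0 : Y ω = 0 := le_antisymm (not_lt.1 hω) (hpos ω)
        by_cases h : ω ∈ {ω' | Y ω' ≤ x}
        · rw [Set.indicator_of_mem h]
          simp [hY0]
        · simp [Set.indicator_of_notMem h]
      have hhz : hfun μ Y = fun _ => (0:ℝ) := by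
        funext x
        rw [hfun]
        have hz : ∫ u in Set.Ioo 0 x, Ffun μ Y u * u
            = ∫ u in Set.Ioo 0 x, (0:ℝ) := by
          refine setIntegral_congr_fun measurableSet_Ioo (fun u hu => ?_)
          have : μ {ω | u < Y ω} = 0 :=
            measure_mono_null (fun ω h => lt_trans hu.1 h) hnd
          simp [Ffun, this]
        rw [hz]
        simp
      rw [hVz, hhz]
    · obtain ⟨x₁, hx₁⟩ := V_eventually_pos μ Y hmeas hpos hnd
      have hVposEv : ∀ᶠ x in atTop, 0 < Vfun μ Y x :=
        (eventually_ge_atTop x₁).mono (fun x hx => hx₁ x hx)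
      have hhge : ∀ᶠ x in atTop, Vfun μ Y x ≤ hfun μ Y x := by
        filter_upwards [eventually_ge_atTop (0:ℝ)] with x hx0
        rw [hfun_eq μ Y hmeas hpos hx0]
        nlinarith [mul_nonneg (sq_nonneg x) (Ffun_nonneg μ Y x)]
      have hhposEv : ∀ᶠ x in atTop, 0 < hfun μ Y x := by
        filter_upwards [hVposEv, hhge] with x h1 h2
        linarith
      have hVpos' : ∃ x₁' : ℝ, ∀ x ≥ x₁', 0 < Vfun μ Y x := ⟨x₁, hx₁⟩
      have hhpos' : ∃ x₂ : ℝ, ∀ x ≥ x₂, 0 < hfun μ Y x := by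
        obtain ⟨x₂, hx₂⟩ := eventually_atTop.1 hhposEv
        exact ⟨x₂, hx₂⟩
      constructor
      · intro hSV
        have hT := T_div_V μ Y hmeas hpos hVpos' hSV
        have hratio : Tendsto (fun x => hfun μ Y x / Vfun μ Y x) atTop (nhds 1) := by
          have base := Tendsto.add
            (tendsto_const_nhds : Tendsto (fun _ : ℝ => (1:ℝ)) atTop (nhds 1)) hT
          rw [add_zero] at base
          refine base.congr' ?_
          filter_upwards [hVposEv, eventually_ge_atTop (0:ℝ)] with x hV hx0
          rw [hfun_eq μ Y hmeas hpos hx0, add_div, div_self hV.ne']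
        exact sv_transfer hSV hratio (hhposEv.mono fun x h => h.ne')
          (hVposEv.mono fun x h => h.ne')
      · intro hSV
        have hT := T_div_h μ Y hpos hhpos' hSV
        have hratio : Tendsto (fun x => Vfun μ Y x / hfun μ Y x) atTop (nhds 1) := by
          have base := Tendsto.sub
            (tendsto_const_nhds : Tendsto (fun _ : ℝ => (1:ℝ)) atTop (nhds 1)) hT
          rw [sub_zero] at base
          refine base.congr' ?_
          filter_upwards [hhposEv, eventually_ge_atTop (0:ℝ)] with x hh hx0
          have hVx : Vfun μ Y x = hfun μ Y x - x^2 * Ffun μ Y x := by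
            rw [hfun_eq μ Y hmeas hpos hx0]
            ring
          rw [hVx, sub_div, div_self hh.ne']
        exact sv_transfer hSV hratio (hVposEv.mono fun x h => h.ne')
          (hhposEv.mono fun x h => h.ne')
  · intro x hx
    exact part2_identity μ Y hpos hx
end
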